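/- For the linear BSRD, if ∑_{k=1}^∞ (1 − β_k λ_k)/(1+k) = ∞, then (S_n − E(S_n))/n → 0 almost surely as n → ∞. -/

import Mathlib

open MeasureTheory ProbabilityTheory Filter

section Aux
open Finset Asymptotics

lemma aux_integrable {Ω : Type*} {m0 : MeasurableSpace Ω} {μ : Measure Ω} [IsFiniteMeasure μ]
    {f : Ω → ℝ} (hf : Measurable f) {C : ℝ} (h : ∀ ω, |f ω| ≤ C) : Integrable f μ := by
  refine ⟨hf.aestronglyMeasurable, ?_⟩
  exact HasFiniteIntegral.of_bounded (C := C) (ae_of_all _ fun ω => by simpa using h ω)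

lemma aux_bernoulli {Ω : Type*} {m0 : MeasurableSpace Ω} {μ : Measure Ω} [IsProbabilityMeasure μ]
    {f : Ω → ℝ} (hf : Measurable f) (h01 : ∀ ω, f ω = 0 ∨ f ω = 1) {p : ℝ} (hp : 0 ≤ p)
    (hμ : μ {ω | f ω = 1} = ENNReal.ofReal p) : ∫ ω, f ω ∂μ = p := by
  have hind : f = Set.indicator {ω | f ω = 1} (fun _ => (1:ℝ)) := by
    funext ω
    rcases h01 ω with h | h <;> simp [Set.indicator, h]
  have hms : MeasurableSet {ω | f ω = 1} := hf (measurableSet_singleton 1)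
  rw [hind, integral_indicator hms]
  simp [Measure.real, hμ, ENNReal.toReal_ofReal hp]

lemma aux_sumsq : ∀ n : ℕ, ∑ i ∈ range n, (2 / ((i:ℝ)+1))^2 ≤ 8 := by
  intro n
  have h : ∀ i : ℕ, (2 / ((i:ℝ)+1))^2 ≤ 8 * (1/((i:ℝ)+1) - 1/((i:ℝ)+2)) := by
    intro i
    have h1 : (0:ℝ) < (i:ℝ)+1 := by positivity
    have h2 : (0:ℝ) < (i:ℝ)+2 := by positivity
    have key : (2 / ((i:ℝ)+1))^2 * (((i:ℝ)+1)^2 * (((i:ℝ)+1)*((i:ℝ)+2)))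
        ≤ 8 * (1/((i:ℝ)+1) - 1/((i:ℝ)+2)) * (((i:ℝ)+1)^2 * (((i:ℝ)+1)*((i:ℝ)+2))) := by
      have e1 : (2 / ((i:ℝ)+1))^2 * (((i:ℝ)+1)^2 * (((i:ℝ)+1)*((i:ℝ)+2)))
          = 4 * (((i:ℝ)+1)*((i:ℝ)+2)) := by field_simp; ring
      have e2 : 8 * (1/((i:ℝ)+1) - 1/((i:ℝ)+2)) * (((i:ℝ)+1)^2 * (((i:ℝ)+1)*((i:ℝ)+2)))
          = 8 * ((i:ℝ)+1)^2 := by field_simp; ring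
      rw [e1, e2]; nlinarith
    have hpos : (0:ℝ) < ((i:ℝ)+1)^2 * (((i:ℝ)+1)*((i:ℝ)+2)) := by positivity
    exact le_of_mul_le_mul_right key hpos
  calc ∑ i ∈ range n, (2 / ((i:ℝ)+1))^2
      ≤ ∑ i ∈ range n, 8 * (1/((i:ℝ)+1) - 1/((i:ℝ)+2)) := sum_le_sum fun i _ => h i
    _ = 8 * (1 - 1/((n:ℝ)+1)) := by
        rw [← mul_sum]
        congr 1
        have h2 : ∀ i : ℕ, 1/((i:ℝ)+1) - 1/((i:ℝ)+2) = (fun i : ℕ => -(1/((i:ℝ)+1))) (i+1) - (fun i : ℕ => -(1/((i:ℝ)+1))) i := by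
          intro i; push_cast; ring
        rw [Finset.sum_congr rfl (fun i _ => h2 i), Finset.sum_range_sub (fun i => -(1/((i:ℝ)+1)))]
        push_cast; ring
    _ ≤ 8 := by
        have : (0:ℝ) ≤ 1/((n:ℝ)+1) := by positivity
        nlinarith

lemma aux_kronecker {b x : ℕ → ℝ} {L : ℝ} (hb1 : ∀ n, 1 ≤ b n) (hmono : Monotone b)
    (htop : Tendsto b atTop atTop)
    (hx : Tendsto (fun n => ∑ i ∈ range n, x i) atTop (nhds L)) :
    Tendsto (fun n => (∑ i ∈ range n, b i * x i) / b n) atTop (nhds 0) := by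
  set T : ℕ → ℝ := fun n => ∑ i ∈ range n, x i with hT
  have hbpos : ∀ n, (0:ℝ) < b n := fun n => lt_of_lt_of_le one_pos (hb1 n)
  have hbne : ∀ n, b n ≠ 0 := fun n => (hbpos n).ne'
  set g : ℕ → ℝ := fun i => b (i+1) - b i with hg
  set f : ℕ → ℝ := fun i => g i * (T (i+1) - L) with hf
  have hgnn : ∀ i, 0 ≤ g i := fun i => sub_nonneg.2 (hmono (Nat.le_succ i))
  have habel : ∀ n, ∑ i ∈ range n, b i * x i
      = b n * T n - (∑ i ∈ range n, g i * T (i+1)) := by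
    intro n
    induction n with
    | zero => simp [hT]
    | succ n ih =>
      rw [sum_range_succ, ih, sum_range_succ]
      have : T (n+1) = T n + x n := by simp [hT, sum_range_succ]
      simp only [hg]
      ring_nf
      rw [add_comm 1 n, this]
      ring
  have hgsum : ∀ n, ∑ i ∈ range n, g i = b n - b 0 := by
    intro n
    have := Finset.sum_range_sub (fun i => b i) n
    simpa [hg, Finset.sum_sub_distrib] using this
  have hgtop : Tendsto (fun n => ∑ i ∈ range n, g i) atTop atTop := by
    simp only [hgsum]; exact tendsto_atTop_add_const_right _ _ htop
  have hfo : f =o[atTop] g := by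
    have h1 : (fun i => T (i+1) - L) =o[atTop] (fun _ : ℕ => (1:ℝ)) := by
      rw [isLittleO_one_iff]
      have h := (hx.comp (tendsto_add_atTop_nat 1)).sub (tendsto_const_nhds (x := L))
      simpa [sub_self] using h
    have h2 : g =O[atTop] g := isBigO_refl _ _
    have := h2.mul_isLittleO h1
    simpa [hf, mul_comm, mul_one] using this
  have hsumo : (fun n => ∑ i ∈ range n, f i) =o[atTop] (fun n => ∑ i ∈ range n, g i) :=
    hfo.sum_range hgnn hgtop
  have hgO : (fun n => ∑ i ∈ range n, g i) =O[atTop] b := by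
    rw [isBigO_iff]
    refine ⟨1, Filter.Eventually.of_forall fun n => ?_⟩
    rw [hgsum]
    have h0 : (0:ℝ) ≤ b n - b 0 := sub_nonneg.2 (hmono (Nat.zero_le n))
    rw [Real.norm_of_nonneg h0, Real.norm_of_nonneg (hbpos n).le, one_mul]
    linarith [hb1 0]
  have hfob : (fun n => ∑ i ∈ range n, f i) =o[atTop] b := hsumo.trans_isBigO hgO
  have h3 : Tendsto (fun n => (∑ i ∈ range n, f i) / b n) atTop (nhds 0) :=
    hfob.tendsto_div_nhds_zero
  have hdecomp : ∀ n, (∑ i ∈ range n, b i * x i) / b n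
      = T n - (1 - b 0 / b n) * L - (∑ i ∈ range n, f i) / b n := by
    intro n
    have hfs : ∑ i ∈ range n, f i
        = (∑ i ∈ range n, g i * T (i+1)) - (b n - b 0) * L := by
      simp only [hf, mul_sub, sum_sub_distrib, ← sum_mul]
      rw [hgsum]
    rw [habel, hfs]
    field_simp [hbne n]
    ring
  have hb0 : Tendsto (fun n => b 0 / b n) atTop (nhds 0) := by
    simpa [div_eq_mul_inv] using (htop.inv_tendsto_atTop).const_mul (b 0)
  have hlim : Tendsto (fun n => T n - (1 - b 0 / b n) * L - (∑ i ∈ range n, f i) / b n)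
      atTop (nhds (L - (1 - 0) * L - 0)) :=
    (hx.sub (((tendsto_const_nhds.sub hb0)).mul tendsto_const_nhds)).sub h3
  simp only [sub_zero, one_mul, sub_self] at hlim
  exact Tendsto.congr (fun n => (hdecomp n).symm) hlim

end Aux

set_option maxHeartbeats 1000000 in
/-- SLLN for the linear BSRD: if `∑_{k=1}^∞ (1 - β k * λ k)/(1 + k) = ∞`, then
`(S n - E(S n))/n → 0` almost surely. -/
theorem stmt16 {Ω : Type*} {m0 : MeasurableSpace Ω} (μ : Measure Ω) [IsProbabilityMeasure μ]
    (X Y : ℕ → Ω → ℝ) (α β lam : ℕ → ℝ)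
    (S : ℕ → Ω → ℝ) (hS : ∀ m ω, S m ω = ∑ j ∈ Finset.range m, X (j + 1) ω)
    (F : ℕ → MeasurableSpace Ω)
    (hF : ∀ m, F m = MeasurableSpace.comap
      (fun ω => ((fun j : Fin m => X (j + 1) ω), (fun j : Fin m => Y (j + 1) ω))) inferInstance)
    (hXmeas : ∀ j, Measurable (X j)) (hYmeas : ∀ j, Measurable (Y j))
    (hX01 : ∀ j ω, X j ω = 0 ∨ X j ω = 1)
    (hY01 : ∀ j ω, Y j ω = 0 ∨ Y j ω = 1)
    (hα : ∀ n, 0 ≤ α n) (hβ : ∀ n, 0 ≤ β n) (hαβ : ∀ n, α n + β n ≤ 1)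
    (hlam0 : ∀ n, 0 ≤ lam n) (hlam1 : ∀ n, lam n ≤ 1)
    (hYindep : iIndepFun Y μ)
    (hbern : ∀ n, μ {ω | Y n ω = 1} = ENNReal.ofReal (lam n))
    (hYind : ∀ n, IndepFun (Y n) (fun ω => (fun j : Fin n => X (j + 1) ω)) μ)
    (hinit : μ {ω | X 1 ω = 1} = ENNReal.ofReal (α 0))
    (hmodel : ∀ n : ℕ, 1 ≤ n →
      μ[X (n + 1) | MeasurableSpace.comap (fun ω => (S n ω, Y n ω)) inferInstance]
        =ᵐ[μ] fun ω => α n + β n * S n ω * Y n ω / n)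
    (hBSRD : ∀ n : ℕ, 1 ≤ n →
      μ[X (n + 1) | F n]
        =ᵐ[μ] μ[X (n + 1) | MeasurableSpace.comap (fun ω => (S n ω, Y n ω)) inferInstance])
    (hdiv : Tendsto
      (fun n : ℕ => ∑ k ∈ Finset.Icc 1 n, (1 - β k * lam k) / (1 + (k : ℝ))) atTop atTop) :
    ∀ᵐ ω ∂μ, Tendsto (fun n : ℕ => (S n ω - ∫ ω', S n ω' ∂μ) / n) atTop (nhds 0) := by
  classical
  -- scalar bounds
  have hβ1 : ∀ n, β n ≤ 1 := fun n => by have h1 := hαβ n; have h2 := hα n; linarith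
  have hbl0 : ∀ n, 0 ≤ β n * lam n := fun n => mul_nonneg (hβ n) (hlam0 n)
  have hbl1 : ∀ n, β n * lam n ≤ 1 := fun n =>
    le_trans (mul_le_of_le_one_right (hβ n) (hlam1 n)) (hβ1 n)
  have hX0 : ∀ j ω, 0 ≤ X j ω := fun j ω => by rcases hX01 j ω with h | h <;> rw [h] <;> norm_num
  have hX1 : ∀ j ω, X j ω ≤ 1 := fun j ω => by rcases hX01 j ω with h | h <;> rw [h] <;> norm_num
  have hY0 : ∀ j ω, 0 ≤ Y j ω := fun j ω => by rcases hY01 j ω with h | h <;> rw [h] <;> norm_num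
  have hY1 : ∀ j ω, Y j ω ≤ 1 := fun j ω => by rcases hY01 j ω with h | h <;> rw [h] <;> norm_num
  -- S facts
  have hSmeas : ∀ m, Measurable (S m) := by
    intro m
    have h : S m = fun ω => ∑ j ∈ Finset.range m, X (j + 1) ω := funext fun ω => hS m ω
    rw [h]; exact Finset.measurable_sum _ fun j _ => hXmeas _
  have hS0 : ∀ m ω, 0 ≤ S m ω := fun m ω => by
    rw [hS]; exact Finset.sum_nonneg fun j _ => hX0 _ _
  have hSle : ∀ m ω, S m ω ≤ (m : ℝ) := fun m ω => by
    rw [hS]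
    calc ∑ j ∈ Finset.range m, X (j+1) ω ≤ ∑ _j ∈ Finset.range m, (1:ℝ) :=
          Finset.sum_le_sum fun j _ => hX1 _ _
      _ = (m:ℝ) := by simp
  have hS0eq : ∀ ω, S 0 ω = 0 := fun ω => by rw [hS]; simp
  have hSsucc : ∀ i ω, S (i+1) ω = S i ω + X (i+1) ω := fun i ω => by
    rw [hS, hS, Finset.sum_range_succ]
  have hXint : ∀ j, Integrable (X j) μ := fun j =>
    aux_integrable (hXmeas j) (C := 1) fun ω => abs_le.2 ⟨by linarith [hX0 j ω], hX1 j ω⟩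
  have hYint : ∀ j, Integrable (Y j) μ := fun j =>
    aux_integrable (hYmeas j) (C := 1) fun ω => abs_le.2 ⟨by linarith [hY0 j ω], hY1 j ω⟩
  have hSint : ∀ m, Integrable (S m) μ := fun m =>
    aux_integrable (hSmeas m) (C := m) fun ω => abs_le.2 ⟨by linarith [hS0 m ω], hSle m ω⟩
  have hEX : ∀ j, 0 ≤ (∫ ω, X j ω ∂μ) ∧ (∫ ω, X j ω ∂μ) ≤ 1 := by
    intro j
    refine ⟨integral_nonneg fun ω => hX0 j ω, ?_⟩
    calc (∫ ω, X j ω ∂μ) ≤ ∫ _ω, (1:ℝ) ∂μ :=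
          integral_mono (hXint j) (integrable_const 1) fun ω => hX1 j ω
      _ = 1 := by simp
  have hEY : ∀ n, (∫ ω, Y n ω ∂μ) = lam n := fun n =>
    aux_bernoulli (hYmeas n) (hY01 n) (hlam0 n) (hbern n)
  -- filtration
  have hTmeas : ∀ n, Measurable (fun ω => (fun j : Fin n => X (j + 1) ω)) := fun n =>
    measurable_pi_lambda _ fun j => hXmeas _
  have hGle : ∀ n, MeasurableSpace.comap
      (fun ω => (fun j : Fin n => X (j + 1) ω)) MeasurableSpace.pi ≤ m0 :=
    fun n => measurable_iff_comap_le.mp (hTmeas n)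
  have hGmono : Monotone (fun n => MeasurableSpace.comap
      (fun ω => (fun j : Fin n => X (j + 1) ω)) MeasurableSpace.pi) := by
    intro n m hnm
    have hres : Measurable (fun (v : Fin m → ℝ) => (fun j : Fin n => v (Fin.castLE hnm j))) :=
      measurable_pi_lambda _ fun j => measurable_pi_apply _
    have hcomp : (fun ω => (fun j : Fin n => X (j + 1) ω))
        = (fun (v : Fin m → ℝ) => (fun j : Fin n => v (Fin.castLE hnm j)))
          ∘ (fun ω => (fun j : Fin m => X (j + 1) ω)) := rfl
    show MeasurableSpace.comap _ _ ≤ MeasurableSpace.comap _ _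
    rw [hcomp, ← MeasurableSpace.comap_comp]
    exact MeasurableSpace.comap_mono (measurable_iff_comap_le.mp hres)
  set 𝒢 : Filtration ℕ m0 :=
    ⟨fun n => MeasurableSpace.comap (fun ω => (fun j : Fin n => X (j + 1) ω)) MeasurableSpace.pi,
      hGmono, hGle⟩ with h𝒢
  have h𝒢n : ∀ n, 𝒢 n = MeasurableSpace.comap
      (fun ω => (fun j : Fin n => X (j + 1) ω)) MeasurableSpace.pi := fun n => rfl
  have hG0 : 𝒢 0 = ⊥ := by
    rw [h𝒢n]
    have hpi : (MeasurableSpace.pi : MeasurableSpace (Fin 0 → ℝ)) = ⊥ := by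
      have : (MeasurableSpace.pi : MeasurableSpace (Fin 0 → ℝ))
          = ⨆ j : Fin 0, MeasurableSpace.comap (fun v : Fin 0 → ℝ => v j) inferInstance := rfl
      rw [this, iSup_of_empty]
    rw [hpi, MeasurableSpace.comap_bot]
  have hFle : ∀ n, F n ≤ m0 := by
    intro n; rw [hF]
    exact measurable_iff_comap_le.mp
      ((hTmeas n).prodMk (measurable_pi_lambda _ fun j => hYmeas _))
  have hGF : ∀ n, 𝒢 n ≤ F n := by
    intro n
    rw [h𝒢n, hF]
    have hcomp : (fun ω => (fun j : Fin n => X (j + 1) ω))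
        = Prod.fst ∘ (fun ω => ((fun j : Fin n => X (j + 1) ω), (fun j : Fin n => Y (j + 1) ω))) :=
      rfl
    rw [hcomp, ← MeasurableSpace.comap_comp]
    exact MeasurableSpace.comap_mono (measurable_iff_comap_le.mp measurable_fst)
  have hTm𝒢 : ∀ n, Measurable[𝒢 n] (fun ω => (fun j : Fin n => X (j + 1) ω)) := fun n =>
    measurable_iff_comap_le.mpr le_rfl
  have hXmG : ∀ n j, j < n → Measurable[𝒢 n] (X (j + 1)) := by
    intro n j hj
    exact (measurable_pi_apply (⟨j, hj⟩ : Fin n)).comp (hTm𝒢 n)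
  have hSmG : ∀ n, StronglyMeasurable[𝒢 n] (S n) := by
    intro n
    have h : S n = fun ω => ∑ j ∈ Finset.range n, X (j + 1) ω := funext fun ω => hS n ω
    rw [h]
    refine Measurable.stronglyMeasurable ?_
    exact Finset.measurable_sum _ fun j hj => hXmG n j (Finset.mem_range.mp hj)
  -- the key conditional expectation
  have hA : ∀ i : ℕ, μ[X (i + 1) | 𝒢 i] =ᵐ[μ] fun ω => α i + β i * lam i / (i:ℝ) * S i ω := by
    intro i
    rcases Nat.eq_zero_or_pos i with hi | hi
    · subst hi
      have h0 : μ[X 1 | 𝒢 0] = fun _ => ∫ ω, X 1 ω ∂μ := by rw [hG0]; exact condExp_bot _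
      have hEX1 : ∫ ω, X 1 ω ∂μ = α 0 := aux_bernoulli (hXmeas 1) (hX01 1) (hα 0) hinit
      rw [h0, hEX1]
      refine Filter.EventuallyEq.of_eq (funext fun ω => ?_)
      simp [hS0eq ω]
    · have hi1 : 1 ≤ i := hi
      have key := condExp_condExp_of_le (μ := μ) (f := X (i+1)) (hGF i) (hFle i)
      have step2 : μ[μ[X (i+1) | F i] | 𝒢 i]
          =ᵐ[μ] μ[(fun ω => α i + (β i / (i:ℝ)) * (S i ω * Y i ω)) | 𝒢 i] := by
        refine condExp_congr_ae ?_
        refine ((hBSRD i hi1).trans (hmodel i hi1)).trans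
          (Filter.EventuallyEq.of_eq (funext fun ω => by ring))
      have hSY_int : Integrable (fun ω => S i ω * Y i ω) μ := by
        refine aux_integrable ((hSmeas i).mul (hYmeas i)) (C := i) fun ω => ?_
        rw [abs_mul]
        calc |S i ω| * |Y i ω| ≤ (i:ℝ) * 1 := by
              apply mul_le_mul
              · rw [abs_of_nonneg (hS0 i ω)]; exact hSle i ω
              · rw [abs_of_nonneg (hY0 i ω)]; exact hY1 i ω
              · positivity
              · positivity
          _ = (i:ℝ) := mul_one _
      have step3 : μ[(fun ω => α i + (β i / (i:ℝ)) * (S i ω * Y i ω)) | 𝒢 i]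
          =ᵐ[μ] fun ω => α i + (β i / (i:ℝ)) * ((μ[(fun ω' => S i ω' * Y i ω') | 𝒢 i]) ω) := by
        have h1 : (fun ω => α i + (β i / (i:ℝ)) * (S i ω * Y i ω))
            = (fun _ => α i) + (β i / (i:ℝ)) • (fun ω => S i ω * Y i ω) := rfl
        rw [h1]
        refine (condExp_add (integrable_const _) (hSY_int.smul _) _).trans ?_
        have h2 := condExp_smul (μ := μ) (m := 𝒢 i) (β i / (i:ℝ)) (fun ω => S i ω * Y i ω)
        have h3 : μ[(fun _ => α i) | 𝒢 i] = fun _ => α i := condExp_const (𝒢.le i) _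
        filter_upwards [h2] with ω hω2
        simp only [Pi.add_apply, h3, Pi.smul_apply, smul_eq_mul] at *
        rw [hω2]
      have step4 : μ[(fun ω' => S i ω' * Y i ω') | 𝒢 i] =ᵐ[μ] fun ω => S i ω * lam i := by
        have hmul := condExp_mul_of_stronglyMeasurable_left (μ := μ) (m := 𝒢 i) (hSmG i)
          (by exact hSY_int) (hYint i)
        have hY_ce : μ[Y i | 𝒢 i] =ᵐ[μ] fun _ => lam i := by
          have hle₁ : MeasurableSpace.comap (Y i) inferInstance ≤ m0 :=
            measurable_iff_comap_le.mp (hYmeas i)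
          have hYm : StronglyMeasurable[MeasurableSpace.comap (Y i) inferInstance] (Y i) :=
            Measurable.stronglyMeasurable (measurable_iff_comap_le.mpr le_rfl)
          have hind : ProbabilityTheory.Indep
              (MeasurableSpace.comap (Y i) inferInstance) (𝒢 i) μ := hYind i
          have hh := condExp_indep_eq hle₁ (𝒢.le i) hYm hind
          rw [show μ[Y i] = lam i from hEY i] at hh
          exact hh
        calc μ[(fun ω' => S i ω' * Y i ω') | 𝒢 i] =ᵐ[μ] S i * μ[Y i | 𝒢 i] := hmul
          _ =ᵐ[μ] fun ω => S i ω * lam i := by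
              filter_upwards [hY_ce] with ω hω
              simp only [Pi.mul_apply, hω]
      refine (key.symm.trans (step2.trans (step3.trans ?_)))
      filter_upwards [step4] with ω hω
      rw [hω]
      ring
  -- expectation recursion
  set c : ℕ → ℝ := fun m => ∫ ω, S m ω ∂μ with hcdef
  have hc0 : c 0 = 0 := by
    simp only [hcdef]
    rw [integral_congr_ae (Filter.EventuallyEq.of_eq (funext hS0eq))]
    simp
  have hcX : ∀ i, c (i+1) = c i + ∫ ω, X (i+1) ω ∂μ := by
    intro i
    simp only [hcdef]
    calc (∫ ω, S (i+1) ω ∂μ) = ∫ ω, (S i ω + X (i+1) ω) ∂μ :=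
          integral_congr_ae (Filter.EventuallyEq.of_eq (funext fun ω => hSsucc i ω))
      _ = (∫ ω, S i ω ∂μ) + ∫ ω, X (i+1) ω ∂μ := integral_add (hSint i) (hXint (i+1))
  have hEXi : ∀ i : ℕ, (∫ ω, X (i+1) ω ∂μ) = α i + β i * lam i / (i:ℝ) * c i := by
    intro i
    have h1 : (∫ ω, X (i+1) ω ∂μ) = ∫ ω, (μ[X (i+1) | 𝒢 i]) ω ∂μ :=
      (integral_condExp (𝒢.le i)).symm
    rw [h1, integral_congr_ae (hA i)]
    rw [integral_add (integrable_const _) ((hSint i).const_mul _), integral_const,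
      integral_const_mul]
    simp [hcdef]
  have hcrec : ∀ i : ℕ, c (i+1) = α i + (1 + β i * lam i / (i:ℝ)) * c i := by
    intro i; rw [hcX i, hEXi i]; ring
  have hcbd : ∀ m, 0 ≤ c m ∧ c m ≤ (m:ℝ) := by
    intro m
    constructor
    · exact integral_nonneg fun ω => hS0 m ω
    · calc (∫ ω, S m ω ∂μ) ≤ ∫ _ω, (m:ℝ) ∂μ :=
            integral_mono (hSint m) (integrable_const _) fun ω => hSle m ω
        _ = (m:ℝ) := by simp
  -- the normalizing sequence
  set r : ℕ → ℝ := fun k => 1 + β k * lam k / (k:ℝ) with hrdef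
  set a : ℕ → ℝ := fun m => ∏ k ∈ Finset.Ico 1 m, r k with hadef
  have hr1 : ∀ k, 1 ≤ r k := fun k =>
    le_add_of_nonneg_right (div_nonneg (hbl0 k) (Nat.cast_nonneg k))
  have hrpos : ∀ k, 0 < r k := fun k => lt_of_lt_of_le one_pos (hr1 k)
  have ha_succ : ∀ m, a (m+1) = a m * r m := by
    intro m
    rcases Nat.eq_zero_or_pos m with h0 | h0
    · subst h0
      simp only [hadef, hrdef]
      norm_num
    · simp only [hadef]
      rw [Finset.prod_Ico_succ_top h0]
  have ha1 : ∀ m, 1 ≤ a m := by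
    intro m
    induction m with
    | zero => simp [hadef]
    | succ m ih =>
      rw [ha_succ m]
      nlinarith [hr1 m]
  have hapos : ∀ m, 0 < a m := fun m => lt_of_lt_of_le one_pos (ha1 m)
  have hcrec' : ∀ i : ℕ, c (i+1) = α i + r i * c i := fun i => by
    rw [hcrec i, hrdef]
  -- martingale increments
  set Z : ℕ → Ω → ℝ := fun i ω => (S (i+1) ω - c (i+1) - r i * (S i ω - c i)) / ((i:ℝ) + 1)
    with hZdef
  have hnum : ∀ i ω, |S (i+1) ω - c (i+1) - r i * (S i ω - c i)| ≤ 2 := by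
    intro i ω
    have h1 : S (i+1) ω - c (i+1) - r i * (S i ω - c i)
        = (X (i+1) ω - (∫ ω', X (i+1) ω' ∂μ)) - (β i * lam i / (i:ℝ)) * (S i ω - c i) := by
      rw [hSsucc i ω, hcX i, hrdef]
      ring
    rw [h1]
    have e1 : |X (i+1) ω - (∫ ω', X (i+1) ω' ∂μ)| ≤ 1 := by
      have h2 := hX0 (i+1) ω; have h3 := hX1 (i+1) ω
      have h4 := (hEX (i+1)).1; have h5 := (hEX (i+1)).2
      rw [abs_le]; constructor <;> linarith
    have e2 : |(β i * lam i / (i:ℝ)) * (S i ω - c i)| ≤ 1 := by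
      rcases Nat.eq_zero_or_pos i with h0 | h0
      · subst h0
        simp
      · have hipos : (0:ℝ) < (i:ℝ) := by exact_mod_cast h0
        rw [abs_mul]
        have hA1 : |β i * lam i / (i:ℝ)| ≤ 1/(i:ℝ) := by
          rw [abs_of_nonneg (div_nonneg (hbl0 i) hipos.le)]
          gcongr
          exact hbl1 i
        have hA2 : |S i ω - c i| ≤ (i:ℝ) := by
          rw [abs_le]
          constructor
          · linarith [(hcbd i).2, hS0 i ω]
          · linarith [(hcbd i).1, hSle i ω]
        calc |β i * lam i / (i:ℝ)| * |S i ω - c i| ≤ (1/(i:ℝ)) * (i:ℝ) :=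
              mul_le_mul hA1 hA2 (abs_nonneg _) (by positivity)
          _ = 1 := by field_simp
    calc |(X (i+1) ω - (∫ ω', X (i+1) ω' ∂μ)) - (β i * lam i / (i:ℝ)) * (S i ω - c i)|
        ≤ |X (i+1) ω - (∫ ω', X (i+1) ω' ∂μ)| + |(β i * lam i / (i:ℝ)) * (S i ω - c i)| :=
          abs_sub _ _
      _ ≤ 2 := by linarith
  have hZbd : ∀ i ω, |Z i ω| ≤ 2 / ((i:ℝ)+1) := by
    intro i ω
    simp only [hZdef]
    rw [abs_div, abs_of_pos (show (0:ℝ) < (i:ℝ)+1 by positivity)]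
    gcongr
    exact hnum i ω
  have hZmeas : ∀ i, Measurable (Z i) := by
    intro i
    simp only [hZdef]
    exact ((((hSmeas (i+1)).sub measurable_const).sub
      (((hSmeas i).sub measurable_const).const_mul _)).div_const _)
  have hZmG : ∀ i, StronglyMeasurable[𝒢 (i+1)] (Z i) := by
    intro i
    have h1 : StronglyMeasurable[𝒢 (i+1)] (S (i+1)) := hSmG (i+1)
    have h2 : StronglyMeasurable[𝒢 (i+1)] (S i) := (hSmG i).mono (𝒢.mono (Nat.le_succ i))
    simp only [hZdef, div_eq_mul_inv]
    exact (((h1.sub stronglyMeasurable_const).sub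
      ((h2.sub stronglyMeasurable_const).const_mul _)).mul stronglyMeasurable_const)
  have hZint : ∀ i, Integrable (Z i) μ := fun i =>
    aux_integrable (hZmeas i) (C := 2/((i:ℝ)+1)) (hZbd i)
  have hZcond : ∀ i, μ[Z i | 𝒢 i] =ᵐ[μ] 0 := by
    intro i
    set W : Ω → ℝ := fun ω => S i ω - c (i+1) - r i * (S i ω - c i) with hWdef
    have hZeq : Z i = (((i:ℝ)+1)⁻¹) • (X (i+1) + W) := by
      funext ω
      simp only [hZdef, hWdef, Pi.smul_apply, Pi.add_apply, smul_eq_mul]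
      rw [hSsucc i ω, div_eq_inv_mul]
      ring
    have hWm : StronglyMeasurable[𝒢 i] W := ((hSmG i).sub stronglyMeasurable_const).sub
      (((hSmG i).sub stronglyMeasurable_const).const_mul _)
    have hWint : Integrable W μ := ((hSint i).sub (integrable_const _)).sub
      (((hSint i).sub (integrable_const _)).const_mul _)
    have h1 := condExp_smul (μ := μ) (m := 𝒢 i) (𝕜 := ℝ) (((i:ℝ)+1)⁻¹) (X (i+1) + W)
    have h2 := condExp_add (μ := μ) (m := 𝒢 i) (hXint (i+1)) hWint
    have h4 : μ[W | 𝒢 i] = W := condExp_of_stronglyMeasurable (𝒢.le i) hWm hWint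
    rw [hZeq]
    refine h1.trans ?_
    filter_upwards [h2, hA i] with ω hω2 hω3
    simp only [Pi.smul_apply, Pi.zero_apply, smul_eq_mul]
    rw [Pi.add_apply] at hω2
    rw [hω2, hω3, h4]
    simp only [hWdef, hrdef]
    rw [hcrec i]
    ring
  -- the martingale of scaled increments
  set N : ℕ → Ω → ℝ := fun n ω => ∑ i ∈ Finset.range n, Z i ω with hNdef
  have hNmeasG : ∀ n, StronglyMeasurable[𝒢 n] (N n) := by
    intro n
    simp only [hNdef]
    refine Measurable.stronglyMeasurable ?_
    refine Finset.measurable_sum _ fun i hi => ?_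
    have hle : 𝒢 (i+1) ≤ 𝒢 n := 𝒢.mono (Nat.succ_le_of_lt (Finset.mem_range.mp hi))
    exact ((hZmG i).measurable.mono hle le_rfl)
  have hNmeas : ∀ n, Measurable (N n) := by
    intro n
    simp only [hNdef]
    exact Finset.measurable_sum _ fun i _ => hZmeas i
  have hNbd : ∀ n ω, |N n ω| ≤ 2*n := by
    intro n ω
    simp only [hNdef]
    refine (Finset.abs_sum_le_sum_abs _ _).trans ?_
    calc ∑ i ∈ Finset.range n, |Z i ω| ≤ ∑ _i ∈ Finset.range n, (2:ℝ) := by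
          refine Finset.sum_le_sum fun i _ => (hZbd i ω).trans ?_
          rw [div_le_iff₀ (by positivity)]
          nlinarith [(Nat.cast_nonneg i : (0:ℝ) ≤ (i:ℝ))]
      _ = 2*n := by simp [mul_comm]
  have hNint : ∀ n, Integrable (N n) μ := fun n =>
    aux_integrable (hNmeas n) (C := 2*n) (hNbd n)
  have hNmart : Martingale N 𝒢 μ := by
    refine martingale_of_condExp_sub_eq_zero_nat (fun n => hNmeasG n) hNint ?_
    intro n
    have hdiff : N (n+1) - N n = Z n := by
      funext ω; simp [hNdef, Finset.sum_range_succ]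
    rw [hdiff]; exact hZcond n
  -- second moment bound
  have hNsqint : ∀ n, Integrable (fun ω => (N n ω)^2) μ := by
    intro n
    refine aux_integrable ((hNmeas n).pow_const 2) (C := (2*n)^2) fun ω => ?_
    rw [abs_pow]
    exact pow_le_pow_left₀ (abs_nonneg _) (hNbd n ω) 2
  have hNZ : ∀ n, ∫ ω, N n ω * Z n ω ∂μ = 0 := by
    intro n
    have hint : Integrable (fun ω => N n ω * Z n ω) μ := by
      refine aux_integrable ((hNmeas n).mul (hZmeas n)) (C := (2*n) * (2/((n:ℝ)+1))) fun ω => ?_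
      rw [abs_mul]
      exact mul_le_mul (hNbd n ω) (hZbd n ω) (abs_nonneg _) (by positivity)
    have h1 : ∫ ω, N n ω * Z n ω ∂μ = ∫ ω, (μ[(fun ω' => N n ω' * Z n ω') | 𝒢 n]) ω ∂μ :=
      (integral_condExp (𝒢.le n)).symm
    have h2 : μ[(fun ω' => N n ω' * Z n ω') | 𝒢 n] =ᵐ[μ] fun ω => N n ω * ((μ[Z n | 𝒢 n]) ω) := by
      have hmul := condExp_mul_of_stronglyMeasurable_left (μ := μ) (m := 𝒢 n) (hNmeasG n)
        (by exact hint) (hZint n)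
      exact hmul
    have h3 : μ[(fun ω' => N n ω' * Z n ω') | 𝒢 n] =ᵐ[μ] fun _ => (0:ℝ) := by
      filter_upwards [h2, hZcond n] with ω hω2 hωz
      rw [hω2]
      rw [Pi.zero_apply] at hωz
      rw [hωz, mul_zero]
    rw [h1, integral_congr_ae h3]
    simp
  have hNsq : ∀ n, ∫ ω, (N n ω)^2 ∂μ ≤ 8 := by
    have key : ∀ n, ∫ ω, (N n ω)^2 ∂μ ≤ ∑ i ∈ Finset.range n, (2/((i:ℝ)+1))^2 := by
      intro n
      induction n with
      | zero => simp [hNdef]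
      | succ n ih =>
        have hintNZ : Integrable (fun ω => 2*(N n ω * Z n ω)) μ := by
          refine Integrable.const_mul ?_ 2
          refine aux_integrable ((hNmeas n).mul (hZmeas n)) (C := (2*n) * (2/((n:ℝ)+1)))
            fun ω => ?_
          rw [abs_mul]
          exact mul_le_mul (hNbd n ω) (hZbd n ω) (abs_nonneg _) (by positivity)
        have hintZ2 : Integrable (fun ω => (Z n ω)^2) μ := by
          refine aux_integrable ((hZmeas n).pow_const 2) (C := (2/((n:ℝ)+1))^2) fun ω => ?_
          rw [abs_pow]
          exact pow_le_pow_left₀ (abs_nonneg _) (hZbd n ω) 2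
        have hsq : ∀ ω, (N (n+1) ω)^2 = ((N n ω)^2 + 2*(N n ω * Z n ω)) + (Z n ω)^2 := by
          intro ω; simp only [hNdef, Finset.sum_range_succ]; ring
        have hZ2le : ∫ ω, (Z n ω)^2 ∂μ ≤ (2/((n:ℝ)+1))^2 := by
          calc ∫ ω, (Z n ω)^2 ∂μ ≤ ∫ _ω, (2/((n:ℝ)+1))^2 ∂μ := by
                refine integral_mono hintZ2 (integrable_const _) fun ω => ?_
                rw [← sq_abs]
                exact pow_le_pow_left₀ (abs_nonneg _) (hZbd n ω) 2
            _ = (2/((n:ℝ)+1))^2 := by simp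
        calc ∫ ω, (N (n+1) ω)^2 ∂μ
            = ∫ ω, (((N n ω)^2 + 2*(N n ω * Z n ω)) + (Z n ω)^2) ∂μ :=
              integral_congr_ae (Filter.EventuallyEq.of_eq (funext hsq))
          _ = (∫ ω, ((N n ω)^2 + 2*(N n ω * Z n ω)) ∂μ) + ∫ ω, (Z n ω)^2 ∂μ :=
              integral_add ((hNsqint n).add hintNZ) hintZ2
          _ = ((∫ ω, (N n ω)^2 ∂μ) + ∫ ω, 2*(N n ω * Z n ω) ∂μ) + ∫ ω, (Z n ω)^2 ∂μ := by
              rw [integral_add (hNsqint n) hintNZ]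
          _ = (∫ ω, (N n ω)^2 ∂μ) + ∫ ω, (Z n ω)^2 ∂μ := by
              rw [integral_const_mul, hNZ n]; ring
          _ ≤ (∑ i ∈ Finset.range n, (2/((i:ℝ)+1))^2) + (2/((n:ℝ)+1))^2 := add_le_add ih hZ2le
          _ = ∑ i ∈ Finset.range (n+1), (2/((i:ℝ)+1))^2 := (Finset.sum_range_succ _ n).symm
    exact fun n => le_trans (key n) (aux_sumsq n)
  -- L¹ bound and a.s. convergence of the martingale
  have hNl1 : ∀ n, eLpNorm (N n) 1 μ ≤ ((5:ℝ).toNNReal : ENNReal) := by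
    intro n
    have habs : ∫ ω, |N n ω| ∂μ ≤ 5 := by
      have hmono' : ∀ ω, |N n ω| ≤ ((N n ω)^2 + 1)/2 := fun ω => by
        nlinarith [sq_nonneg (|N n ω| - 1), sq_abs (N n ω)]
      have hint1 : Integrable (fun ω => |N n ω|) μ := (hNint n).abs
      have hint2 : Integrable (fun ω => ((N n ω)^2 + 1)/2) μ :=
        (((hNsqint n).add (integrable_const 1)).div_const 2)
      calc ∫ ω, |N n ω| ∂μ ≤ ∫ ω, ((N n ω)^2 + 1)/2 ∂μ := integral_mono hint1 hint2 hmono'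
        _ = ((∫ ω, (N n ω)^2 ∂μ) + 1)/2 := by
            rw [integral_div, integral_add (hNsqint n) (integrable_const _)]
            simp
        _ ≤ (8+1)/2 := by linarith [hNsq n]
        _ ≤ 5 := by norm_num
    have heq : eLpNorm (N n) 1 μ = ENNReal.ofReal (∫ ω, ‖N n ω‖ ∂μ) := by
      rw [eLpNorm_one_eq_lintegral_enorm, ← ofReal_integral_norm_eq_lintegral_enorm (hNint n)]
    rw [heq]
    refine le_trans (ENNReal.ofReal_le_ofReal
      (show (∫ ω, ‖N n ω‖ ∂μ) ≤ 5 from by simpa [Real.norm_eq_abs] using habs)) (le_of_eq rfl)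
  have hconv : ∀ᵐ ω ∂μ, ∃ L, Tendsto (fun n => N n ω) atTop (nhds L) :=
    hNmart.submartingale.exists_ae_tendsto_of_bdd hNl1
  -- the weights b
  set b : ℕ → ℝ := fun i => ((i:ℝ)+1)/a (i+1) with hbdef
  have hble : ∀ m : ℕ, a (m+1) ≤ (m:ℝ)+1 := by
    intro m
    induction m with
    | zero =>
      rw [ha_succ 0]
      have h1 : a 0 = 1 := by simp [hadef]
      have h2 : r 0 = 1 := by simp [hrdef]
      rw [h1, h2]; norm_num
    | succ m ih =>
      rw [ha_succ (m+1)]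
      have hrle : r (m+1) ≤ ((m:ℝ)+2)/((m:ℝ)+1) := by
        simp only [hrdef]
        have hcast : ((m+1:ℕ):ℝ) = (m:ℝ)+1 := by push_cast; ring
        rw [hcast]
        have h1 : ((m:ℝ)+2)/((m:ℝ)+1) = 1 + 1/((m:ℝ)+1) := by field_simp; ring
        rw [h1]
        gcongr
        exact hbl1 (m+1)
      calc a (m+1) * r (m+1) ≤ (((m:ℝ)+1)) * (((m:ℝ)+2)/((m:ℝ)+1)) :=
            mul_le_mul ih hrle (hrpos _).le (by positivity)
        _ = (m:ℝ)+2 := by field_simp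
        _ = ((m+1:ℕ):ℝ)+1 := by push_cast; ring
  have hb1 : ∀ i, 1 ≤ b i := by
    intro i
    simp only [hbdef]
    rw [le_div_iff₀ (hapos _), one_mul]
    exact hble i
  have hbmono : Monotone b := by
    refine monotone_nat_of_le_succ fun i => ?_
    simp only [hbdef]
    rw [ha_succ (i+1), div_le_div_iff₀ (hapos _) (mul_pos (hapos _) (hrpos _))]
    have hcast : ((i+1:ℕ):ℝ) = (i:ℝ)+1 := by push_cast; ring
    have hkey : ((i:ℝ)+1) * r (i+1) ≤ (i:ℝ)+2 := by
      simp only [hrdef, hcast]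
      rw [mul_add, mul_one, mul_div_cancel₀ _ (show ((i:ℝ)+1) ≠ 0 by positivity)]
      linarith [hbl1 (i+1)]
    calc ((i:ℝ)+1) * (a (i+1) * r (i+1)) = (((i:ℝ)+1) * r (i+1)) * a (i+1) := by ring
      _ ≤ ((i:ℝ)+2) * a (i+1) := by
          exact mul_le_mul_of_nonneg_right hkey (hapos _).le
      _ = (((i+1:ℕ):ℝ)+1) * a (i+1) := by rw [hcast]; ring
  have hbprod : ∀ n, b n = ∏ k ∈ Finset.Icc 1 n, (((k:ℝ)+1)/((k:ℝ) + β k * lam k)) := by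
    intro n
    induction n with
    | zero =>
      simp only [hbdef]
      have h1 : a 1 = 1 := by simp [hadef]
      rw [h1]
      norm_num
    | succ n ih =>
      rw [Finset.prod_Icc_succ_top (show 1 ≤ n+1 by omega), ← ih]
      simp only [hbdef]
      rw [ha_succ (n+1)]
      have hcast : ((n+1:ℕ):ℝ) = (n:ℝ)+1 := by push_cast; ring
      have hrval : r (n+1) = (((n:ℝ)+1) + β (n+1) * lam (n+1))/((n:ℝ)+1) := by
        simp only [hrdef, hcast]
        field_simp
      rw [hrval, hcast]
      have hden1 : ((n:ℝ)+1) ≠ 0 := by positivity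
      have hden2 : (((n:ℝ)+1) + β (n+1) * lam (n+1)) ≠ 0 := by
        have := hbl0 (n+1); positivity
      have hane : a (n+1) ≠ 0 := (hapos _).ne'
      rw [div_mul_div_comm, ← mul_div_assoc, div_div_eq_mul_div]
      ring_nf
  have hbexp : ∀ n, Real.exp (∑ k ∈ Finset.Icc 1 n, (1 - β k * lam k)/(1 + (k:ℝ))) ≤ b n := by
    intro n
    rw [Real.exp_sum, hbprod n]
    refine Finset.prod_le_prod (fun k _ => (Real.exp_pos _).le) (fun k hk => ?_)
    have hk1 : 1 ≤ k := (Finset.mem_Icc.mp hk).1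
    have hkpos : (0:ℝ) < (k:ℝ) := by exact_mod_cast hk1
    have hden : (0:ℝ) < (k:ℝ) + β k * lam k := by linarith [hbl0 k]
    have hq : (0:ℝ) < ((k:ℝ) + β k * lam k)/((k:ℝ)+1) := by positivity
    have hlog := Real.log_le_sub_one_of_pos hq
    have h1 : (1 - β k * lam k)/(1+(k:ℝ)) = 1 - ((k:ℝ) + β k * lam k)/((k:ℝ)+1) := by
      rw [eq_sub_iff_add_eq, div_add_div _ _ (by positivity) (by positivity)]
      rw [div_eq_one_iff_eq (by positivity)]
      ring
    have h2 : Real.exp ((1 - β k * lam k)/(1+(k:ℝ)))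
        ≤ Real.exp (- Real.log (((k:ℝ) + β k * lam k)/((k:ℝ)+1))) := by
      apply Real.exp_le_exp.2
      rw [h1]
      linarith
    refine h2.trans ?_
    rw [Real.exp_neg, Real.exp_log hq, inv_div]
  have hbtop : Tendsto b atTop atTop :=
    tendsto_atTop_mono hbexp (Real.tendsto_exp_atTop.comp hdiv)
  -- telescoping identity
  have htel : ∀ (ω : Ω) (m : ℕ), ∑ i ∈ Finset.range m, b i * Z i ω = (S m ω - c m)/a m := by
    intro ω m
    induction m with
    | zero =>
      have h1 : a 0 = 1 := by simp [hadef]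
      simp [hS0eq ω, hc0, h1]
    | succ m ih =>
      rw [Finset.sum_range_succ, ih]
      simp only [hbdef, hZdef]
      rw [ha_succ m]
      have h1 : ((m:ℝ)+1) ≠ 0 := by positivity
      have h2 : a m ≠ 0 := (hapos m).ne'
      have h3 : r m ≠ 0 := (hrpos m).ne'
      field_simp
      ring
  -- conclusion
  have hZtend : ∀ ω, Tendsto (fun n => Z n ω) atTop (nhds 0) := by
    intro ω
    have hlim : Tendsto (fun n : ℕ => 2/((n:ℝ)+1)) atTop (nhds 0) := by
      apply Tendsto.div_atTop (tendsto_const_nhds)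
      exact tendsto_atTop_add_const_right _ 1 tendsto_natCast_atTop_atTop
    refine squeeze_zero_norm (fun n => ?_) hlim
    simpa [Real.norm_eq_abs] using hZbd n ω
  have hgoal_eq : ∀ n, (∫ ω', S n ω' ∂μ) = c n := fun n => rfl
  filter_upwards [hconv] with ω hω
  obtain ⟨L, hL⟩ := hω
  have hL' : Tendsto (fun n => ∑ i ∈ Finset.range n, Z i ω) atTop (nhds L) := by
    have : (fun n => N n ω) = fun n => ∑ i ∈ Finset.range n, Z i ω := by
      funext n; simp [hNdef]
    rwa [this] at hL
  have hkron := aux_kronecker hb1 hbmono hbtop hL'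
  have hmain : Tendsto (fun n => (S (n+1) ω - c (n+1))/((n:ℝ)+1)) atTop (nhds 0) := by
    have heq : ∀ n, (S (n+1) ω - c (n+1))/((n:ℝ)+1)
        = (∑ i ∈ Finset.range n, b i * Z i ω)/(b n) + Z n ω := by
      intro n
      rw [htel ω n]
      simp only [hbdef, hZdef]
      rw [ha_succ n]
      have h1 : ((n:ℝ)+1) ≠ 0 := by positivity
      have h2 : a n ≠ 0 := (hapos n).ne'
      have h3 : r n ≠ 0 := (hrpos n).ne'
      field_simp
      ring
    refine Tendsto.congr (fun n => (heq n).symm) ?_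
    simpa using hkron.add (hZtend ω)
  have hshift : Tendsto (fun n : ℕ => (S (n+1) ω - c (n+1))/(((n+1:ℕ)):ℝ)) atTop (nhds 0) := by
    refine Tendsto.congr (fun n => ?_) hmain
    push_cast
    ring_nf
  have hfinal : Tendsto (fun n : ℕ => (S n ω - c n)/(n:ℝ)) atTop (nhds 0) :=
    (tendsto_add_atTop_iff_nat 1).mp hshift
  simpa only [hgoal_eq] using hfinal
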